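/- Suppose D_{k,2}(n) is the smallest constant C such that ‖p(T₁,...,T_n)‖ ≤ C sup_{‖z‖₂≤1} |p(z)| for every k-homogeneous polynomial p in n variables and every commuting n-tuple of operators with ‖∑ α_j T_j‖ ≤ 1 for all ‖α‖₂ = 1. If there exist (a) a Steiner unimodular polynomial p₀ with ‖p₀‖_{P(^k ℓ₂ⁿ)} ≤ A log^{3/2}(n), built on a partial Steiner system of cardinality |J| ≥ c·n^{k−1}, and (b) commuting operators S₁,...,S_n satisfying the row contractivity condition with ‖p₀(S₁,...,S_n)‖ ≥ (1+‖p₀‖)^{−k/2}|J|, then D_{k,2}(n) ≥ c' n^{k−1}/log^{(3/4)(k+2)}(n) for some constant c' > 0 independent of n. -/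

import Mathlib

open Finset in
lemma filter_finRange_eq_sort {n : ℕ} (J : Finset (Fin n)) :
    (List.finRange n).filter (fun j => decide (j ∈ J)) = J.sort (· ≤ ·) := by
  refine (fun hp h1 h2 => List.Perm.eq_of_pairwise' (r := (· ≤ ·)) h1 h2 hp) ?_ ?_ ?_
  · apply List.perm_of_nodup_nodup_toFinset_eq
    · exact (List.nodup_finRange n).filter _
    · exact J.sort_nodup _
    · ext x
      simp [List.mem_filter, Finset.mem_sort]
  · exact ((List.pairwise_lt_finRange n).filter _).imp le_of_lt
  · exact J.pairwise_sort _

lemma prod_ofFn_ite {M : Type*} [Monoid M] {n : ℕ} (J : Finset (Fin n)) (S : Fin n → M) :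
    (List.ofFn fun j => if j ∈ J then S j else 1).prod = ((J.sort (· ≤ ·)).map S).prod := by
  rw [List.ofFn_eq_map, ← filter_finRange_eq_sort]
  generalize List.finRange n = l
  induction l with
  | nil => rfl
  | cons a l ih =>
    by_cases h : a ∈ J <;> simp [h, ih, List.filter_cons]

lemma sum_ind {M : Type*} [AddCommMonoid M] [Module ℂ M] {n k : ℕ}
    (𝒥 : Finset (Finset (Fin n))) (hcard : ∀ J ∈ 𝒥, J.card = k)
    (cJ : Finset (Fin n) → ℂ) (f : (Fin n → ℕ) → M) :
    ∑ α ∈ Finset.Nat.antidiagonalTuple n k,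
        (∑ J ∈ 𝒥, if α = (fun j => if j ∈ J then 1 else 0) then cJ J else 0) • f α
      = ∑ J ∈ 𝒥, cJ J • f (fun j => if j ∈ J then 1 else 0) := by
  simp_rw [Finset.sum_smul]
  rw [Finset.sum_comm]
  refine Finset.sum_congr rfl fun J hJ => ?_
  rw [show (∑ α ∈ Finset.Nat.antidiagonalTuple n k,
      (if α = (fun j => if j ∈ J then 1 else 0) then cJ J else 0) • f α)
      = ∑ α ∈ Finset.Nat.antidiagonalTuple n k,
      (if α = (fun j => if j ∈ J then 1 else 0) then cJ J • f α else 0) from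
    Finset.sum_congr rfl fun α _ => by split <;> simp]
  rw [Finset.sum_ite_eq' (Finset.Nat.antidiagonalTuple n k)]
  rw [if_pos]
  rw [Finset.Nat.mem_antidiagonalTuple]
  rw [← hcard J hJ]
  simp [Finset.sum_ite_mem]



/-- Lower bound for `D_{k,2}(n)`.  Suppose `D` satisfies the von Neumann-type inequality
`‖p(T₁,...,Tₙ)‖ ≤ D · sup_{‖z‖₂≤1}|p(z)|` for every `k`-homogeneous polynomial `p` in `n`
variables and every commuting `n`-tuple of operators with `‖∑ αⱼ Tⱼ‖ ≤ 1` whenever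
`‖α‖₂ = 1` (in particular the smallest such constant does).  If there exist
(a) a Steiner unimodular polynomial `p₀` with `‖p₀‖_{P(^k ℓ₂ⁿ)} ≤ A log^{3/2} n`, built on
a partial Steiner system of cardinality `|𝒥| ≥ c·n^{k−1}`, and
(b) commuting operators `S₁,...,Sₙ` satisfying the row contractivity condition with
`‖p₀(S₁,...,Sₙ)‖ ≥ (1+‖p₀‖)^{−k/2}|𝒥|`,
then `D ≥ c'· n^{k−1}/log^{(3/4)(k+2)} n` for some `c' > 0` independent of `n`. -/
theorem D_k2_lower_bound (k : ℕ) (hk : 3 ≤ k) (A c : ℝ) (hA : 0 < A) (hc : 0 < c)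
    {H : Type*} [NormedAddCommGroup H] [InnerProductSpace ℂ H] :
    ∃ c' > 0, ∀ n : ℕ, 3 ≤ n → ∀ D : ℝ,
      (∀ (a : (Fin n → ℕ) → ℂ) (S : Fin n → H →L[ℂ] H),
        (∀ i j, S i * S j = S j * S i) →
        (∀ α : Fin n → ℂ, ∑ j, ‖α j‖ ^ 2 = 1 → ‖∑ j, α j • S j‖ ≤ 1) →
        ∀ N : ℝ,
          (∀ z : Fin n → ℂ, ∑ j, ‖z j‖ ^ 2 ≤ 1 →
            ‖∑ α ∈ Finset.Nat.antidiagonalTuple n k, a α * ∏ j, z j ^ α j‖ ≤ N) →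
          ‖∑ α ∈ Finset.Nat.antidiagonalTuple n k,
              a α • (List.ofFn fun j => S j ^ α j).prod‖ ≤ D * N) →
      ∀ (𝒥 : Finset (Finset (Fin n))) (cJ : Finset (Fin n) → ℂ) (P₀ : ℝ)
        (S : Fin n → H →L[ℂ] H),
        (∀ J ∈ 𝒥, J.card = k) →
        (∀ B : Finset (Fin n), B.card = k - 1 →
          (𝒥.filter fun J => B ⊆ J).card ≤ 1) →
        (∀ J ∈ 𝒥, cJ J = 1 ∨ cJ J = -1) →
        IsLUB {r : ℝ | ∃ z : Fin n → ℂ,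
          (∑ i, ‖z i‖ ^ 2 ≤ 1) ∧ r = ‖∑ J ∈ 𝒥, cJ J * ∏ j ∈ J, z j‖} P₀ →
        P₀ ≤ A * Real.log n ^ ((3 : ℝ) / 2) →
        c * (n : ℝ) ^ (k - 1) ≤ 𝒥.card →
        (∀ i j, S i * S j = S j * S i) →
        (∀ α : Fin n → ℂ, ∑ j, ‖α j‖ ^ 2 = 1 → ‖∑ j, α j • S j‖ ≤ 1) →
        (1 + P₀) ^ (-(k : ℝ) / 2) * (𝒥.card : ℝ) ≤
          ‖∑ J ∈ 𝒥, cJ J • ((J.sort (· ≤ ·)).map S).prod‖ →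
        c' * (n : ℝ) ^ (k - 1) / Real.log n ^ ((3 : ℝ) / 4 * (k + 2)) ≤ D := by
  refine ⟨c * (1 + A) ^ (-(k : ℝ) / 2) / A, by positivity, ?_⟩
  intro n hn D hvN 𝒥 cJ P₀ S hcardJ _hSteiner _hsign hLUB hP₀A hcard hcomm hrow hlow
  -- basic facts about the logarithm
  set L := Real.log n with hLdef
  have hL1 : (1 : ℝ) ≤ L := by
    rw [hLdef, ← Real.log_exp 1]
    apply Real.log_le_log (Real.exp_pos 1)
    calc Real.exp 1 ≤ 2.7182818286 := Real.exp_one_lt_d9.le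
    _ ≤ 3 := by norm_num
    _ ≤ (n : ℝ) := by exact_mod_cast hn
  have hL0 : (0 : ℝ) < L := lt_of_lt_of_le one_pos hL1
  have hX1 : (1 : ℝ) ≤ L ^ ((3 : ℝ) / 2) := Real.one_le_rpow hL1 (by norm_num)
  have hX0 : (0 : ℝ) < L ^ ((3 : ℝ) / 2) := lt_of_lt_of_le one_pos hX1
  set N := A * L ^ ((3 : ℝ) / 2) with hNdef
  have hN0 : 0 < N := mul_pos hA hX0
  -- P₀ is nonnegative and bounds the polynomial on the ball
  have hP₀0 : 0 ≤ P₀ := by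
    refine le_trans (norm_nonneg (∑ J ∈ 𝒥, cJ J * ∏ j ∈ J, (0 : ℂ))) ?_
    exact hLUB.1 ⟨fun _ => 0, by simp, rfl⟩
  -- the coefficients
  set a : (Fin n → ℕ) → ℂ := fun α =>
    ∑ J ∈ 𝒥, if α = (fun j => if j ∈ J then 1 else 0) then cJ J else 0 with hadef
  -- the polynomial identity
  have hpoly : ∀ z : Fin n → ℂ, ∑ j, ‖z j‖ ^ 2 ≤ 1 →
      ‖∑ α ∈ Finset.Nat.antidiagonalTuple n k, a α * ∏ j, z j ^ α j‖ ≤ N := by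
    intro z hz
    have h1 : (∑ α ∈ Finset.Nat.antidiagonalTuple n k, a α * ∏ j, z j ^ α j)
        = ∑ J ∈ 𝒥, cJ J * ∏ j ∈ J, z j := by
      simp_rw [← smul_eq_mul (α := ℂ), hadef]
      rw [sum_ind 𝒥 hcardJ cJ (fun α => ∏ j, z j ^ α j)]
      refine Finset.sum_congr rfl fun J _ => ?_
      congr 1
      rw [show (∏ j, z j ^ (if j ∈ J then 1 else 0)) = ∏ j, (if j ∈ J then z j else 1) from
        Finset.prod_congr rfl fun j _ => by split <;> simp]
      rw [Finset.prod_ite_mem, Finset.univ_inter]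
    rw [h1]
    exact le_trans (hLUB.1 ⟨z, hz, rfl⟩) hP₀A
  -- the operator identity
  have hop : (∑ α ∈ Finset.Nat.antidiagonalTuple n k,
        a α • (List.ofFn fun j => S j ^ α j).prod)
      = ∑ J ∈ 𝒥, cJ J • ((J.sort (· ≤ ·)).map S).prod := by
    rw [hadef]
    rw [sum_ind 𝒥 hcardJ cJ (fun α => (List.ofFn fun j => S j ^ α j).prod)]
    refine Finset.sum_congr rfl fun J _ => ?_
    congr 1
    rw [show (List.ofFn fun j => S j ^ (if j ∈ J then 1 else 0))
        = List.ofFn fun j => if j ∈ J then S j else 1 from by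
      congr 1; funext j; split <;> simp]
    exact prod_ofFn_ite J S
  -- apply the von Neumann-type inequality
  have hkey : (1 + P₀) ^ (-(k : ℝ) / 2) * (𝒥.card : ℝ) ≤ D * N := by
    refine le_trans hlow ?_
    rw [← hop]
    exact hvN a S hcomm hrow N hpoly
  -- arithmetic
  have hbase : 1 + P₀ ≤ (1 + A) * L ^ ((3 : ℝ) / 2) := by
    calc 1 + P₀ ≤ L ^ ((3 : ℝ) / 2) + A * L ^ ((3 : ℝ) / 2) :=
      add_le_add hX1 hP₀A
    _ = (1 + A) * L ^ ((3 : ℝ) / 2) := by ring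
  have hmono : ((1 + A) * L ^ ((3 : ℝ) / 2)) ^ (-(k : ℝ) / 2)
      ≤ (1 + P₀) ^ (-(k : ℝ) / 2) := by
    apply Real.rpow_le_rpow_of_nonpos (by linarith) hbase
    exact div_nonpos_of_nonpos_of_nonneg (neg_nonpos.mpr (Nat.cast_nonneg k)) (by norm_num)
  have hnum : c * (n : ℝ) ^ (k - 1) * ((1 + A) * L ^ ((3 : ℝ) / 2)) ^ (-(k : ℝ) / 2)
      ≤ (1 + P₀) ^ (-(k : ℝ) / 2) * (𝒥.card : ℝ) := by
    rw [mul_comm ((1 + P₀) ^ (-(k : ℝ) / 2))]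
    exact mul_le_mul hcard hmono (Real.rpow_nonneg (by positivity) _) (Nat.cast_nonneg _)
  have hD : (1 + P₀) ^ (-(k : ℝ) / 2) * (𝒥.card : ℝ) / N ≤ D :=
    (div_le_iff₀ hN0).mpr hkey
  refine le_trans (le_of_eq ?_) (le_trans ((div_le_div_iff_of_pos_right hN0).mpr hnum) hD)
  -- the equality of constants
  have hsplit : ((1 + A) * L ^ ((3 : ℝ) / 2)) ^ (-(k : ℝ) / 2)
      = (1 + A) ^ (-(k : ℝ) / 2) * (L ^ ((3 : ℝ) / 4 * k))⁻¹ := by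
    rw [Real.mul_rpow (by linarith) hX0.le, ← Real.rpow_mul hL0.le,
      show (3 : ℝ) / 2 * (-(k : ℝ) / 2) = -((3 : ℝ) / 4 * (k : ℝ)) from by ring,
      Real.rpow_neg hL0.le]
  have hLe : L ^ ((3 : ℝ) / 4 * (k + 2)) = L ^ ((3 : ℝ) / 4 * k) * L ^ ((3 : ℝ) / 2) := by
    rw [← Real.rpow_add hL0]
    ring_nf
  rw [hsplit, hNdef, hLe]
  have h34 : (0 : ℝ) < L ^ ((3 : ℝ) / 4 * (k : ℝ)) := Real.rpow_pos_of_pos hL0 _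
  field_simp
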